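/- Let ψ_ε(e) = max(|e| − ε, 0) with ε ≥ 0 (Vapnik loss) and let g(z) = α·ψ_ε(aᵀz + b) on ℝⁿ with a ≠ 0, α > 0. Then prox_g(x) = x − α·d_{σ,ε}(aᵀx + b)·a, where σ = ε + α‖a‖² and d_{σ,ε}(e) = sign(e) if |e| > σ, 0 if |e| < ε, and (e − ε·sign(e))/(σ − ε) if ε ≤ |e| ≤ σ. -/

import Mathlib

open scoped RealInnerProductSpace

noncomputable def dSatDead (σ ε e : ℝ) : ℝ :=
  if σ < |e| then Real.sign e
  else if |e| < ε then 0
  else (e - ε * Real.sign e) / (σ - ε)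

lemma key (ε c p u : ℝ) (hc : 0 < c) (hε : 0 ≤ ε) :
    max (|p - c * dSatDead (ε + c) ε p| - ε) 0 + (dSatDead (ε + c) ε p) * u ≤
      max (|p - c * dSatDead (ε + c) ε p + u| - ε) 0 := by
  unfold dSatDead
  split_ifs with h1 h2
  · -- ε + c < |p|
    rcases lt_trichotomy p 0 with hp | hp | hp
    · rw [Real.sign_of_neg hp]
      have habs : |p| = -p := abs_of_neg hp
      have ht : p - c * (-1) < -ε := by rw [habs] at h1; linarith
      have h3 : |p - c * (-1)| = -(p - c * (-1)) := abs_of_neg (by linarith)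
      rw [h3]
      have h4 : max (-(p - c * (-1)) - ε) 0 = -(p - c * (-1)) - ε :=
        max_eq_left (by linarith)
      rw [h4]
      have h5 : -(p - c * (-1) + u) ≤ |p - c * (-1) + u| := neg_le_abs _
      have h6 : |p - c * (-1) + u| - ε ≤ max (|p - c * (-1) + u| - ε) 0 := le_max_left _ _
      linarith
    · subst hp; simp at h1; linarith [abs_nonneg (0:ℝ)]
    · rw [Real.sign_of_pos hp]
      have habs : |p| = p := abs_of_pos hp
      have ht : ε < p - c * 1 := by rw [habs] at h1; linarith
      have h3 : |p - c * 1| = p - c * 1 := abs_of_pos (by linarith)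
      rw [h3]
      have h4 : max (p - c * 1 - ε) 0 = p - c * 1 - ε := max_eq_left (by linarith)
      rw [h4]
      have h5 : p - c * 1 + u ≤ |p - c * 1 + u| := le_abs_self _
      have h6 : |p - c * 1 + u| - ε ≤ max (|p - c * 1 + u| - ε) 0 := le_max_left _ _
      linarith
  · -- |p| < ε
    simp only [mul_zero, sub_zero, zero_mul, add_zero]
    have h4 : max (|p| - ε) 0 = 0 := max_eq_right (by linarith)
    rw [h4]
    exact le_max_right _ _
  · -- ε ≤ |p| ≤ ε + c
    push_neg at h1 h2
    have hσ : ε + c - ε = c := by ring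
    rw [hσ]
    rcases lt_trichotomy p 0 with hp | hp | hp
    · rw [Real.sign_of_neg hp]
      have habs : |p| = -p := abs_of_neg hp
      set d := (p - ε * (-1)) / c with hd
      have hcd : c * d = p + ε := by rw [hd]; field_simp; ring
      have hd0 : d ≤ 0 := div_nonpos_iff.mpr (Or.inr ⟨by rw [habs] at h2; linarith, le_of_lt hc⟩)
      have hd1 : -1 ≤ d := by
        rw [hd, le_div_iff₀ hc]
        rw [habs] at h1; nlinarith
      have ht : p - c * d = -ε := by nlinarith [hcd]
      rw [ht]
      have h3 : |(-ε)| = ε := by rw [abs_neg, abs_of_nonneg hε]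
      rw [h3]
      have h4 : max (ε - ε) 0 = 0 := by simp
      rw [h4]
      have hM0 : (0:ℝ) ≤ max (|-ε + u| - ε) 0 := le_max_right _ _
      have hMu : -u ≤ max (|-ε + u| - ε) 0 := by
        have : -(-ε + u) ≤ |-ε + u| := neg_le_abs _
        have := le_max_left (|-ε + u| - ε) 0
        linarith
      nlinarith [mul_nonneg (neg_nonneg.mpr hd0) hM0, mul_le_mul_of_nonneg_left hMu (neg_nonneg.mpr hd0), mul_nonneg (by linarith : (0:ℝ) ≤ 1 + d) hM0]
    · subst hp
      have hε0 : ε = 0 := le_antisymm (by simpa using h2) hε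
      subst hε0
      simp only [Real.sign_zero, mul_zero, sub_zero, zero_sub, zero_mul, zero_div,
        add_zero, zero_add, zero_mul]
      simpa using le_max_left (|u|) 0
    · rw [Real.sign_of_pos hp]
      have habs : |p| = p := abs_of_pos hp
      set d := (p - ε * 1) / c with hd
      have hcd : c * d = p - ε := by rw [hd]; field_simp
      have hd0 : 0 ≤ d := div_nonneg (by rw [habs] at h2; linarith) (le_of_lt hc)
      have hd1 : d ≤ 1 := by
        rw [hd, div_le_iff₀ hc]
        rw [habs] at h1; linarith
      have ht : p - c * d = ε := by nlinarith [hcd]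
      rw [ht]
      have h3 : |ε| = ε := abs_of_nonneg hε
      rw [h3]
      have h4 : max (ε - ε) 0 = 0 := by simp
      rw [h4]
      have hM0 : (0:ℝ) ≤ max (|ε + u| - ε) 0 := le_max_right _ _
      have hMu : u ≤ max (|ε + u| - ε) 0 := by
        have : ε + u ≤ |ε + u| := le_abs_self _
        have := le_max_left (|ε + u| - ε) 0
        linarith
      nlinarith [mul_nonneg hd0 hM0, mul_le_mul_of_nonneg_left hMu hd0, mul_nonneg (by linarith : (0:ℝ) ≤ 1 - d) hM0]

theorem stmt_13 {n : ℕ} (a : EuclideanSpace ℝ (Fin n)) (ha : a ≠ 0)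
    (b α ε : ℝ) (hα : 0 < α) (hε : 0 ≤ ε) (x : EuclideanSpace ℝ (Fin n)) :
    ∀ z : EuclideanSpace ℝ (Fin n),
      z ≠ x - (α * dSatDead (ε + α * ‖a‖ ^ 2) ε (⟪a, x⟫ + b)) • a →
      (1 / 2) * ‖(x - (α * dSatDead (ε + α * ‖a‖ ^ 2) ε (⟪a, x⟫ + b)) • a) - x‖ ^ 2 +
          α * max (|⟪a, x - (α * dSatDead (ε + α * ‖a‖ ^ 2) ε (⟪a, x⟫ + b)) • a⟫ + b| - ε) 0 <
        (1 / 2) * ‖z - x‖ ^ 2 + α * max (|⟪a, z⟫ + b| - ε) 0 := by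
  intro z hz
  have hc : (0:ℝ) < α * ‖a‖ ^ 2 := by
    have : (0:ℝ) < ‖a‖ := norm_pos_iff.mpr ha
    positivity
  set c : ℝ := α * ‖a‖ ^ 2 with hcdef
  set p : ℝ := ⟪a, x⟫ + b with hpdef
  set d : ℝ := dSatDead (ε + c) ε p with hddef
  set xs : EuclideanSpace ℝ (Fin n) := x - (α * d) • a with hxs
  set w : EuclideanSpace ℝ (Fin n) := z - xs with hw
  have hwne : w ≠ 0 := sub_ne_zero.mpr hz
  set u : ℝ := ⟪a, w⟫ with hu
  have h1 : ⟪a, xs⟫ = ⟪a, x⟫ - α * d * ‖a‖ ^ 2 := by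
    rw [hxs, inner_sub_right, real_inner_smul_right, real_inner_self_eq_norm_sq]
  have h1' : ⟪a, xs⟫ + b = p - c * d := by rw [h1, hpdef, hcdef]; ring
  have h2 : ‖z - x‖ ^ 2 = ‖w‖ ^ 2 - 2 * (α * d) * u + (α * d) ^ 2 * ‖a‖ ^ 2 := by
    have hzx : z - x = w - (α * d) • a := by rw [hw, hxs]; abel
    rw [hzx, norm_sub_sq_real, real_inner_smul_right, norm_smul, real_inner_comm]
    simp [mul_pow, hu]
    ring
  have h3 : ‖xs - x‖ ^ 2 = (α * d) ^ 2 * ‖a‖ ^ 2 := by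
    have : xs - x = -((α * d) • a) := by rw [hxs]; abel
    rw [this, norm_neg, norm_smul]
    simp [mul_pow]
  have h4 : ⟪a, z⟫ + b = (p - c * d) + u := by
    have : z = xs + w := by rw [hw]; abel
    rw [this, inner_add_right, hpdef] at *
    rw [h1] at *
    rw [hcdef]; ring
  have hkey := key ε c p u hc hε
  rw [← hddef] at hkey
  have hαkey : α * (max (|p - c * d| - ε) 0 + d * u) ≤
      α * max (|p - c * d + u| - ε) 0 := by
    exact mul_le_mul_of_nonneg_left hkey (le_of_lt hα)
  have hwpos : (0:ℝ) < ‖w‖ ^ 2 := by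
    have : (0:ℝ) < ‖w‖ := norm_pos_iff.mpr hwne
    positivity
  rw [h1', h4, h2, h3]
  nlinarith [hαkey, hwpos]
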